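/- Let f : X → X be the one-sided full shift on the alphabet {0,1,2,3}. In Example 7 (the potential Φ of Equation (defpotphi) built from a > 0, a continuous strictly concave increasing ℓ₁ : [0,a] → ℝ with ℓ₁(0) = 0, ℓ₂ = −ℓ₁, and an exponentially strictly decreasing sequence x_k → 0 in (0,a)): the potential Φ is continuous on X and (0,0) is an exposed point of Rot(Φ). -/

import Mathlib

open MeasureTheory

noncomputable section

/-- The full shift space on the four symbols `{0,1,2,3}`. -/
abbrev FS : Type := ℕ → Fin 4

/-- The (one-sided full) shift map. -/
def shift4 (x : FS) : FS := fun n => x (n + 1)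

/-- The symbol group: `true` for `S₁ = {0,1}`, `false` for `S₂ = {2,3}`. -/
def grp (s : Fin 4) : Bool := decide (s.1 ≤ 1)

/-- `μ` is a shift-invariant Borel probability measure on the full shift. -/
def InvariantProb (μ : ProbabilityMeasure FS) : Prop :=
  (μ : Measure FS).map shift4 = (μ : Measure FS)

/-- The generalized rotation set of a potential `Φ : FS → ℝ²` with respect to the shift. -/
def rot (Φ : FS → ℝ × ℝ) : Set (ℝ × ℝ) :=
  {w | ∃ μ : ProbabilityMeasure FS, InvariantProb μ ∧ (∫ x, Φ x ∂(μ : Measure FS)) = w}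

open scoped Classical in
/-- The potential `Φ` of Example 7 (Equation (defpotphi)), built from `a > 0`, the concave
arc `ℓ = ℓ₁` (with `ℓ₂ = −ℓ₁`), the sequence `(x_k)` and the cutoff `λ = lam`.
For a sequence `ξ`: if `ξ` stays forever in one of the symbol groups `S₁ = {0,1}`,
`S₂ = {2,3}`, the value is `(0,0)`; if it leaves its initial group within the first `lam`
coordinates the value is `(a,0)`; otherwise, if `t ≥ lam` is the exact number of initial
coordinates spent in one group (so `ξ ∈ Y_i(k)` with `k = t+1 > lam`), the value is
`(x_{k−λ}, ℓ₁(x_{k−λ}))` on the cylinder of the fixed point `111…`, `(x_{k−λ}, ℓ₂(x_{k−λ}))`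
on the cylinder of `333…`, and `(x_{k−λ}, 0)` otherwise. -/
def PhiEx (a : ℝ) (lam : ℕ) (ℓ : ℝ → ℝ) (xs : ℕ → ℝ) (ξ : FS) : ℝ × ℝ :=
  if ∀ j, grp (ξ j) = grp (ξ 0) then (0, 0)
  else
    let t : ℕ := sInf {j | grp (ξ j) ≠ grp (ξ 0)}
    if t < lam then (a, 0)
    else if ∀ j < t, ξ j = (1 : Fin 4) then (xs (t + 1 - lam), ℓ (xs (t + 1 - lam)))
    else if ∀ j < t, ξ j = (3 : Fin 4) then (xs (t + 1 - lam), -ℓ (xs (t + 1 - lam)))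
    else (xs (t + 1 - lam), 0)

lemma cyl_nhds (ξ : FS) (N : ℕ) : {η : FS | ∀ j ≤ N, η j = ξ j} ∈ nhds ξ := by
  have hopen : IsOpen {η : FS | ∀ j ≤ N, η j = ξ j} := by
    have h : {η : FS | ∀ j ≤ N, η j = ξ j}
        = ⋂ j ∈ Finset.Iic N, (fun η : FS => η j) ⁻¹' {ξ j} := by
      ext η; simp [Nat.lt_succ_iff]
    rw [h]
    exact isOpen_biInter_finset fun j _ =>
      (continuous_apply j).isOpen_preimage _ (isOpen_discrete _)
  exact hopen.mem_nhds (fun j _ => rfl)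

lemma phi_locconst (a : ℝ) (lam : ℕ) (ℓ : ℝ → ℝ) (xs : ℕ → ℝ) (ξ η : FS)
    (hne : ¬ ∀ j, grp (ξ j) = grp (ξ 0))
    (hag : ∀ j ≤ sInf {j | grp (ξ j) ≠ grp (ξ 0)}, η j = ξ j) :
    PhiEx a lam ℓ xs η = PhiEx a lam ℓ xs ξ := by
  set t := sInf {j | grp (ξ j) ≠ grp (ξ 0)} with ht
  have hSne : {j | grp (ξ j) ≠ grp (ξ 0)}.Nonempty := by
    push_neg at hne; exact hne
  have htmem : grp (ξ t) ≠ grp (ξ 0) := Nat.sInf_mem hSne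
  have hlt : ∀ j < t, grp (ξ j) = grp (ξ 0) := by
    intro j hj
    by_contra h
    exact absurd (Nat.sInf_le h) (not_le.2 hj)
  have h0 : η 0 = ξ 0 := hag 0 (Nat.zero_le t)
  have htmemη : grp (η t) ≠ grp (η 0) := by rw [hag t le_rfl, h0]; exact htmem
  have hηne : ¬ ∀ j, grp (η j) = grp (η 0) := fun h => htmemη (h t)
  have htη : sInf {j | grp (η j) ≠ grp (η 0)} = t := by
    apply le_antisymm (Nat.sInf_le htmemη)
    by_contra h
    push_neg at h
    set s := sInf {j | grp (η j) ≠ grp (η 0)} with hs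
    have hmem : grp (η s) ≠ grp (η 0) :=
      Nat.sInf_mem (⟨t, htmemη⟩ : {j | grp (η j) ≠ grp (η 0)}.Nonempty)
    clear_value s
    apply hmem
    rw [hag _ h.le, h0]
    exact hlt _ h
  have h1 : (∀ j < t, η j = (1 : Fin 4)) = (∀ j < t, ξ j = (1 : Fin 4)) := by
    refine propext ⟨fun h j hj => ?_, fun h j hj => ?_⟩
    · rw [← hag j hj.le]; exact h j hj
    · rw [hag j hj.le]; exact h j hj
  have h3 : (∀ j < t, η j = (3 : Fin 4)) = (∀ j < t, ξ j = (3 : Fin 4)) := by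
    refine propext ⟨fun h j hj => ?_, fun h j hj => ?_⟩
    · rw [← hag j hj.le]; exact h j hj
    · rw [hag j hj.le]; exact h j hj
  simp only [PhiEx, if_neg hηne, if_neg hne, htη, ← ht, h1, h3]

/-- In Example 7, the potential `Φ` is continuous and `(0,0)` is an exposed point of the
rotation set `Rot(Φ)`. -/
theorem stmt19 (a : ℝ) (ha : 0 < a) (lam : ℕ) (hlam : 3 ≤ lam)
    (ℓ : ℝ → ℝ) (hℓcont : ContinuousOn ℓ (Set.Icc 0 a)) (hℓ0 : ℓ 0 = 0)
    (hℓnonneg : ∀ t ∈ Set.Icc (0 : ℝ) a, 0 ≤ ℓ t)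
    (hℓmono : StrictMonoOn ℓ (Set.Icc 0 a))
    (hℓconc : StrictConcaveOn ℝ (Set.Icc 0 a) ℓ)
    (xs : ℕ → ℝ) (hxs : ∀ k, xs k ∈ Set.Ioo 0 a) (hanti : StrictAnti xs)
    (hexp : ∃ ρ : ℝ, 0 < ρ ∧ ρ < 1 ∧ ∀ k, xs (k + 1) ≤ ρ * xs k)
    (htend : Filter.Tendsto xs Filter.atTop (nhds 0)) :
    Continuous (PhiEx a lam ℓ xs) ∧
    IsExposed ℝ (rot (PhiEx a lam ℓ xs)) {((0 : ℝ), (0 : ℝ))} := by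
  set Φ := PhiEx a lam ℓ xs with hΦdef
  -- continuity
  have hcont : Continuous Φ := by
    rw [continuous_iff_continuousAt]
    intro ξ
    by_cases hstay : ∀ j, grp (ξ j) = grp (ξ 0)
    · have hφξ : Φ ξ = (0, 0) := by simp [hΦdef, PhiEx, hstay]
      rw [ContinuousAt, hφξ, Metric.tendsto_nhds]
      intro ε hε
      have hℓtend : Filter.Tendsto (fun m => ℓ (xs m)) Filter.atTop (nhds 0) := by
        have h0mem : (0 : ℝ) ∈ Set.Icc 0 a := ⟨le_refl 0, ha.le⟩
        have hxsin : Filter.Tendsto xs Filter.atTop (nhdsWithin 0 (Set.Icc 0 a)) :=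
          tendsto_nhdsWithin_of_tendsto_nhds_of_eventually_within _ htend
            (Filter.Eventually.of_forall fun k => ⟨(hxs k).1.le, (hxs k).2.le⟩)
        simpa [hℓ0, Function.comp_def] using (hℓcont 0 h0mem).tendsto.comp hxsin
      have h1 : ∀ᶠ m in Filter.atTop, dist (xs m) 0 < ε :=
        htend (Metric.ball_mem_nhds 0 hε)
      have h2 : ∀ᶠ m in Filter.atTop, dist (ℓ (xs m)) 0 < ε :=
        hℓtend (Metric.ball_mem_nhds 0 hε)
      obtain ⟨M, hM⟩ := Filter.eventually_atTop.1 (h1.and h2)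
      refine Filter.eventually_of_mem (cyl_nhds ξ (M + lam)) ?_
      intro η hη
      by_cases hη0 : ∀ j, grp (η j) = grp (η 0)
      · simpa [hΦdef, PhiEx, hη0] using hε
      · have hSne : {j | grp (η j) ≠ grp (η 0)}.Nonempty := by push_neg at hη0; exact hη0
        set s := sInf {j | grp (η j) ≠ grp (η 0)} with hs
        have hsmem : grp (η s) ≠ grp (η 0) := Nat.sInf_mem hSne
        have hsgt : M + lam < s := by
          by_contra h
          push_neg at h
          apply hsmem
          rw [hη s h, hη 0 (Nat.zero_le _)]
          exact hstay s
        have hT : ¬ s < lam := by omega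
        have hm : M ≤ s + 1 - lam := by omega
        have hx : dist (xs (s + 1 - lam)) 0 < ε := (hM _ hm).1
        have hy : dist (ℓ (xs (s + 1 - lam))) 0 < ε := (hM _ hm).2
        have hy' : dist (-ℓ (xs (s + 1 - lam))) 0 < ε := by
          rw [dist_zero_right] at hy ⊢; simpa using hy
        have h00 : dist (0 : ℝ) (0 : ℝ) < ε := by simpa using hε
        simp only [hΦdef, PhiEx, if_neg hη0, ← hs, if_neg hT]
        split_ifs with hc1 hc3
        · simp only [Prod.dist_eq, sup_lt_iff]; exact ⟨hx, hy⟩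
        · simp only [Prod.dist_eq, sup_lt_iff]; exact ⟨hx, hy'⟩
        · simp only [Prod.dist_eq, sup_lt_iff]; exact ⟨hx, h00⟩
    · refine Filter.EventuallyEq.continuousAt (y := Φ ξ) ?_
      refine Filter.eventually_of_mem (cyl_nhds ξ (sInf {j | grp (ξ j) ≠ grp (ξ 0)})) ?_
      intro η hη
      exact phi_locconst a lam ℓ xs ξ η hstay hη
  -- basic facts about the values of Φ
  have hkey : ∀ ξ : FS, Φ ξ = (0, 0) ∨ 0 < (Φ ξ).1 := by
    intro ξ
    simp only [hΦdef, PhiEx]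
    split_ifs
    · exact Or.inl rfl
    · exact Or.inr ha
    · exact Or.inr (hxs _).1
    · exact Or.inr (hxs _).1
    · exact Or.inr (hxs _).1
  have hpos : ∀ ξ : FS, 0 ≤ (Φ ξ).1 := by
    intro ξ
    rcases hkey ξ with h | h
    · rw [h]
    · exact h.le
  -- shift is measurable
  have hshift : Measurable shift4 :=
    (continuous_pi fun n => continuous_apply (n + 1)).measurable
  -- (0,0) ∈ rot Φ via the Dirac measure at 000...
  have h0mem : ((0 : ℝ), (0 : ℝ)) ∈ rot Φ := by
    refine ⟨⟨Measure.dirac (fun _ => (0 : Fin 4)), inferInstance⟩, ?_, ?_⟩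
    · show (Measure.dirac (fun _ => (0 : Fin 4))).map shift4 = _
      refine (Measure.map_dirac' hshift _).trans ?_
      rfl
    · show (∫ x, Φ x ∂(Measure.dirac (fun _ => (0 : Fin 4)))) = _
      rw [integral_dirac' _ _ hcont.stronglyMeasurable]
      simp [hΦdef, PhiEx]
  have hInt : ∀ μ : ProbabilityMeasure FS, Integrable Φ (μ : Measure FS) := fun μ =>
    hcont.integrable_of_hasCompactSupport (HasCompactSupport.of_compactSpace Φ)
  have hfst : ∀ μ : ProbabilityMeasure FS,
      (∫ x, Φ x ∂(μ : Measure FS)).1 = ∫ x, (Φ x).1 ∂(μ : Measure FS) := by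
    intro μ
    have := (ContinuousLinearMap.fst ℝ ℝ ℝ).integral_comp_comm (hInt μ)
    simpa using this.symm
  refine ⟨hcont, ?_⟩
  intro _
  refine ⟨-(ContinuousLinearMap.fst ℝ ℝ ℝ), ?_⟩
  ext w
  simp only [Set.mem_singleton_iff, Set.mem_setOf_eq, ContinuousLinearMap.neg_apply,
    ContinuousLinearMap.coe_fst', neg_le_neg_iff]
  constructor
  · rintro rfl
    refine ⟨h0mem, ?_⟩
    rintro y ⟨μ, hμinv, rfl⟩
    rw [hfst μ]
    exact integral_nonneg fun x => hpos x
  · rintro ⟨⟨μ, hμinv, rfl⟩, hmax⟩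
    have h0le := hmax _ h0mem
    have hle0 : (∫ x, Φ x ∂(μ : Measure FS)).1 ≤ 0 := h0le
    have hge0 : 0 ≤ (∫ x, Φ x ∂(μ : Measure FS)).1 := by
      rw [hfst μ]
      exact integral_nonneg fun x => hpos x
    have h1 : ∫ x, (Φ x).1 ∂(μ : Measure FS) = 0 := by
      rw [← hfst μ]; exact le_antisymm hle0 hge0
    have hIntfst : Integrable (fun x => (Φ x).1) (μ : Measure FS) :=
      (continuous_fst.comp hcont).integrable_of_hasCompactSupport
        (HasCompactSupport.of_compactSpace _)
    have hae : (fun x => (Φ x).1) =ᶠ[ae (μ : Measure FS)] 0 :=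
      (integral_eq_zero_iff_of_nonneg (fun x => hpos x) hIntfst).1 h1
    have haeΦ : Φ =ᶠ[ae (μ : Measure FS)] fun _ => ((0 : ℝ), (0 : ℝ)) := by
      filter_upwards [hae] with x hx
      rcases hkey x with h | h
      · exact h
      · exact absurd hx (by simp; exact h.ne')
    rw [integral_congr_ae haeΦ]
    simp


end
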